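/- Consider the recursive procedure that, given a range of blocks of the array C (previous-occurrence array of S) with block minima stored in C', finds the position k' of the minimum block, finds within that block the position k of the minimum of C, and (if C[k] < i) recurses on the left sub-interval, reports S[k] and all new elements of block k', then recurses on the right sub-interval, stopping a branch when C[k] ≥ i for all k in the minimum block. This procedure reports exactly the leftmost positions in S[i..j] of all distinct elements of the block-aligned range S[i..j], and examines at most g(n) cells of C per distinct element discovered, where g(n) is the block length. -/
import Mathlib


/-- Minimum of `C` over block `p` (blocks of length `g`, block `p` covering
positions `(p-1)·g+1 .. p·g`). -/
noncomputable def blockMin (C : ℕ → ℕ) (g p : ℕ) : ℕ :=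
  sInf (C '' Set.Icc ((p - 1) * g + 1) (p * g))

open Classical in
/-- The recursive sparsified procedure of Muthukrishnan's algorithm, on the range of
blocks `p..q`.  It finds a block `p*` whose block-minimum (stored in `C'`) is smallest,
and: if all cells `k` of that block have `C[k] ≥ i` it stops, reporting nothing and
scanning that block; otherwise it recurses on the blocks to the left of `p*`, reports
the cells `k` of block `p*` with `C[k] < i` (the leftmost occurrences found in that
block), and recurses on the blocks to the right of `p*`.  The second component counts
the number of cells of `C` examined. -/
noncomputable def sparseProc (C : ℕ → ℕ) (g i : ℕ) : ℕ → ℕ → ℕ → Finset ℕ × ℕ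
  | 0, _, _ => (∅, 0)
  | fuel + 1, p, q =>
    if hpq : p ≤ q then
      have hF : (Finset.Icc p q).Nonempty := ⟨p, by simp [hpq]⟩
      let pstar := ((Finset.Icc p q).exists_min_image (blockMin C g) hF).choose
      let blk := Finset.Icc ((pstar - 1) * g + 1) (pstar * g)
      if ∀ k ∈ blk, i ≤ C k then (∅, blk.card)
      else
        let L := sparseProc C g i fuel p (pstar - 1)
        let R := sparseProc C g i fuel (pstar + 1) q
        (L.1 ∪ blk.filter (fun k => C k < i) ∪ R.1, L.2 + blk.card + R.2)
    else (∅, 0)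

lemma sparseProc_zero (C : ℕ → ℕ) (g i p q : ℕ) : sparseProc C g i 0 p q = (∅, 0) := by
  rw [sparseProc.eq_def]

open Classical in
lemma sparseProc_succ (C : ℕ → ℕ) (g i fuel p q : ℕ) (hpq : p ≤ q)
    (hF : (Finset.Icc p q).Nonempty) :
    sparseProc C g i (fuel + 1) p q =
      (let pstar := ((Finset.Icc p q).exists_min_image (blockMin C g) hF).choose
      let blk := Finset.Icc ((pstar - 1) * g + 1) (pstar * g)
      if ∀ k ∈ blk, i ≤ C k then (∅, blk.card)
      else
        let L := sparseProc C g i fuel p (pstar - 1)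
        let R := sparseProc C g i fuel (pstar + 1) q
        (L.1 ∪ blk.filter (fun k => C k < i) ∪ R.1, L.2 + blk.card + R.2)) := by
  rw [sparseProc.eq_def]
  simp only [dif_pos hpq]

lemma sparseProc_empty (C : ℕ → ℕ) (g i fuel p q : ℕ) (hpq : ¬ p ≤ q) :
    sparseProc C g i (fuel + 1) p q = (∅, 0) := by
  rw [sparseProc.eq_def]; simp only [dif_neg hpq]

lemma blockMin_le (C : ℕ → ℕ) (g : ℕ) {p k : ℕ}
    (h1 : (p - 1) * g + 1 ≤ k) (h2 : k ≤ p * g) : blockMin C g p ≤ C k :=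
  Nat.sInf_le ⟨k, ⟨h1, h2⟩, rfl⟩

lemma blockMin_attained (C : ℕ → ℕ) {g : ℕ} (hg : 1 ≤ g) {p : ℕ} (hp : 1 ≤ p) :
    ∃ k, (p - 1) * g + 1 ≤ k ∧ k ≤ p * g ∧ C k = blockMin C g p := by
  have hab : (p - 1) * g + 1 ≤ p * g := by
    have hgp : g ≤ p * g := Nat.le_mul_of_pos_left g hp
    rw [Nat.sub_one_mul]; omega
  have hne : (C '' Set.Icc ((p - 1) * g + 1) (p * g)).Nonempty :=
    ⟨C ((p - 1) * g + 1), ⟨(p - 1) * g + 1, ⟨le_refl _, hab⟩, rfl⟩⟩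
  obtain ⟨k, hk, hCk⟩ := Nat.sInf_mem hne
  exact ⟨k, hk.1, hk.2, hCk⟩

/-- Every position in the aligned range lies in some block of index in `[p, q]`. -/
lemma mem_some_block {g : ℕ} (hg : 1 ≤ g) {p q k : ℕ} (hp : 1 ≤ p)
    (h1 : (p - 1) * g + 1 ≤ k) (h2 : k ≤ q * g) :
    ∃ p', p ≤ p' ∧ p' ≤ q ∧ (p' - 1) * g + 1 ≤ k ∧ k ≤ p' * g := by
  have hk1 : 1 ≤ k := le_trans (by omega) h1
  refine ⟨(k - 1) / g + 1, ?_, ?_, ?_, ?_⟩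
  · have : p - 1 ≤ (k - 1) / g := (Nat.le_div_iff_mul_le hg).mpr (by omega)
    omega
  · have : (k - 1) / g < q := (Nat.div_lt_iff_lt_mul hg).mpr (by omega)
    omega
  · have := Nat.div_mul_le_self (k - 1) g
    simp only [Nat.add_sub_cancel]
    omega
  · have hdm : (k - 1) / g * g + (k - 1) % g = k - 1 := Nat.div_add_mod' (k - 1) g
    have := Nat.mod_lt (k - 1) (show 0 < g by omega)
    rw [Nat.add_mul, one_mul]
    omega

lemma icc_split {a b c d : ℕ} (h1 : a ≤ b + 1) (h2 : b ≤ c) (h3 : c ≤ d) :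
    Finset.Icc a d = Finset.Icc a b ∪ Finset.Icc (b + 1) c ∪ Finset.Icc (c + 1) d := by
  ext k; simp only [Finset.mem_Icc, Finset.mem_union]; omega

lemma icc_disj {a b c d : ℕ} (h : b < c) : Disjoint (Finset.Icc a b) (Finset.Icc c d) := by
  simp only [Finset.disjoint_left, Finset.mem_Icc]
  omega

lemma card_blk_le {g : ℕ} (pstar : ℕ) :
    (Finset.Icc ((pstar - 1) * g + 1) (pstar * g)).card ≤ g := by
  rw [Nat.card_Icc, Nat.sub_one_mul]
  omega

open Classical in
lemma sparse_main (C : ℕ → ℕ) (g i : ℕ) (hg : 1 ≤ g) :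
    ∀ fuel p q, 1 ≤ p → q < p + fuel →
      (sparseProc C g i fuel p q).1
          = (Finset.Icc ((p - 1) * g + 1) (q * g)).filter (fun k => C k < i) ∧
      (sparseProc C g i fuel p q).2
          ≤ g * (2 * (sparseProc C g i fuel p q).1.card + 1) := by
  intro fuel
  induction fuel with
  | zero =>
    intro p q hp hq
    rw [sparseProc_zero]
    have : ¬ ((p - 1) * g + 1 ≤ q * g) := by
      intro h
      have : q * g ≤ (p - 1) * g := Nat.mul_le_mul_right _ (by omega)
      omega
    rw [Finset.Icc_eq_empty this]
    simp
  | succ fuel IH =>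
    intro p q hp hq
    by_cases hpq : p ≤ q
    · have hF : (Finset.Icc p q).Nonempty := ⟨p, by simp [hpq]⟩
      rw [sparseProc_succ C g i fuel p q hpq hF]
      obtain ⟨hmem, hmin⟩ := ((Finset.Icc p q).exists_min_image (blockMin C g) hF).choose_spec
      set pstar := ((Finset.Icc p q).exists_min_image (blockMin C g) hF).choose with hps
      rw [Finset.mem_Icc] at hmem
      have hp1 : 1 ≤ pstar := le_trans hp hmem.1
      simp only
      by_cases hall : ∀ k ∈ Finset.Icc ((pstar - 1) * g + 1) (pstar * g), i ≤ C k
      · rw [if_pos hall]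
        constructor
        · symm
          rw [Finset.filter_eq_empty_iff]
          intro k hk
          rw [Finset.mem_Icc] at hk
          obtain ⟨p', hpp', hp'q, hk1, hk2⟩ := mem_some_block hg hp hk.1 hk.2
          obtain ⟨k0, hk01, hk02, hk0min⟩ := blockMin_attained C hg hp1
          have h1 : blockMin C g pstar ≤ blockMin C g p' :=
            hmin p' (Finset.mem_Icc.mpr ⟨hpp', hp'q⟩)
          have h2 : blockMin C g p' ≤ C k := blockMin_le C g hk1 hk2
          have h3 : i ≤ C k0 := hall k0 (Finset.mem_Icc.mpr ⟨hk01, hk02⟩)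
          omega
        · simp only [Finset.card_empty]
          calc (Finset.Icc ((pstar - 1) * g + 1) (pstar * g)).card ≤ g := card_blk_le pstar
            _ ≤ g * (2 * 0 + 1) := by omega
      · rw [if_neg hall]
        push_neg at hall
        obtain ⟨k0, hk0mem, hk0⟩ := hall
        have hLb : pstar - 1 < p + fuel := by omega
        have hRb : q < (pstar + 1) + fuel := by omega
        obtain ⟨hL1, hL2⟩ := IH p (pstar - 1) hp hLb
        obtain ⟨hR1, hR2⟩ := IH (pstar + 1) q (by omega) hRb
        rw [Nat.add_sub_cancel] at hR1
        set L := sparseProc C g i fuel p (pstar - 1) with hLdef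
        set R := sparseProc C g i fuel (pstar + 1) q with hRdef
        have h1 : (p - 1) * g + 1 ≤ (pstar - 1) * g + 1 := by
          have : (p - 1) * g ≤ (pstar - 1) * g := Nat.mul_le_mul_right _ (by omega)
          omega
        have h2 : (pstar - 1) * g ≤ pstar * g := Nat.mul_le_mul_right _ (by omega)
        have h3 : pstar * g ≤ q * g := Nat.mul_le_mul_right _ hmem.2
        have hsplit := icc_split (a := (p - 1) * g + 1) (b := (pstar - 1) * g)
          (c := pstar * g) (d := q * g) (by omega) h2 h3
        have hunion : (Finset.Icc ((p - 1) * g + 1) (q * g)).filter (fun k => C k < i)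
            = L.1 ∪ (Finset.Icc ((pstar - 1) * g + 1) (pstar * g)).filter (fun k => C k < i)
              ∪ R.1 := by
          rw [hsplit, Finset.filter_union, Finset.filter_union, hL1, hR1]
        have hd1 : Disjoint L.1
            ((Finset.Icc ((pstar - 1) * g + 1) (pstar * g)).filter (fun k => C k < i)) := by
          rw [hL1]
          exact Disjoint.mono (Finset.filter_subset _ _) (Finset.filter_subset _ _)
            (icc_disj (by omega))
        have hd2 : Disjoint (L.1 ∪
            (Finset.Icc ((pstar - 1) * g + 1) (pstar * g)).filter (fun k => C k < i)) R.1 := by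
          rw [hL1, hR1]
          refine Finset.disjoint_union_left.mpr ⟨?_, ?_⟩ <;>
            exact Disjoint.mono (Finset.filter_subset _ _) (Finset.filter_subset _ _)
              (icc_disj (by omega))
        refine ⟨hunion.symm, ?_⟩
        have hcard : (L.1 ∪ (Finset.Icc ((pstar - 1) * g + 1) (pstar * g)).filter
              (fun k => C k < i) ∪ R.1).card
            = L.1.card + ((Finset.Icc ((pstar - 1) * g + 1) (pstar * g)).filter
              (fun k => C k < i)).card + R.1.card := by
          rw [Finset.card_union_of_disjoint hd2, Finset.card_union_of_disjoint hd1]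
        have hmid : 1 ≤ ((Finset.Icc ((pstar - 1) * g + 1) (pstar * g)).filter
            (fun k => C k < i)).card :=
          Finset.card_pos.mpr ⟨k0, Finset.mem_filter.mpr ⟨hk0mem, hk0⟩⟩
        have hblk : (Finset.Icc ((pstar - 1) * g + 1) (pstar * g)).card ≤ g :=
          card_blk_le pstar
        rw [hcard]
        nlinarith [hL2, hR2]
    · rw [sparseProc_empty C g i fuel p q hpq]
      have : ¬ ((p - 1) * g + 1 ≤ q * g) := by
        intro h
        have : q * g ≤ (p - 1) * g := Nat.mul_le_mul_right _ (by omega)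
        omega
      rw [Finset.Icc_eq_empty this]
      simp

open Classical in
/-- On a block-aligned interval `S[i..j]` (`i = (p_i-1)·g+1`, `j = p_j·g`), the
sparsified procedure reports exactly the leftmost positions in `S[i..j]` of all the
distinct elements of `S[i..j]`, and it examines `O(g)` cells of `C` per new element
discovered: its total work is at most `4·g·(number of reported elements + 1)`. -/
theorem sparseProc_correct {A : Type*} (n : ℕ) (S : ℕ → A) (C : ℕ → ℕ)
    (hC : ∀ k, 1 ≤ k → k ≤ n →
      ((C k = 0 ∧ ∀ k', 1 ≤ k' → k' < k → S k' ≠ S k) ∨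
       (1 ≤ C k ∧ C k < k ∧ S (C k) = S k ∧ ∀ k', C k < k' → k' < k → S k' ≠ S k)))
    (g : ℕ) (hg : 1 ≤ g) (pi pj : ℕ) (hpi : 1 ≤ pi) (hpipj : pi ≤ pj)
    (i j : ℕ) (hi : i = (pi - 1) * g + 1) (hj : j = pj * g) (hjn : j ≤ n) :
    (sparseProc C g i (pj - pi + 1) pi pj).1
        = (Finset.Icc i j).filter (fun k => ∀ k', i ≤ k' → k' < k → S k' ≠ S k) ∧
    (sparseProc C g i (pj - pi + 1) pi pj).2
        ≤ 4 * g * ((sparseProc C g i (pj - pi + 1) pi pj).1.card + 1) := by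
  obtain ⟨h1, h2⟩ := sparse_main C g i hg (pj - pi + 1) pi pj hpi (by omega)
  have hIcc : Finset.Icc ((pi - 1) * g + 1) (pj * g) = Finset.Icc i j := by rw [hi, hj]
  have hfilter : (Finset.Icc i j).filter (fun k => C k < i)
      = (Finset.Icc i j).filter (fun k => ∀ k', i ≤ k' → k' < k → S k' ≠ S k) := by
    apply Finset.filter_congr
    intro k hk
    rw [Finset.mem_Icc] at hk
    have hk1 : 1 ≤ k := le_trans (by omega) hk.1
    have hkn : k ≤ n := le_trans hk.2 hjn
    have hi1 : 1 ≤ i := by omega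
    constructor
    · intro hCk k' hik' hk'k
      rcases hC k hk1 hkn with ⟨_, hall⟩ | ⟨_, _, _, h4⟩
      · exact hall k' (by omega) hk'k
      · exact h4 k' (by omega) hk'k
    · intro hpred
      rcases hC k hk1 hkn with ⟨h0, _⟩ | ⟨hc1, hc2, hc3, _⟩
      · omega
      · by_contra hcon
        exact hpred (C k) (by omega) hc2 hc3
  rw [hIcc, hfilter] at h1
  refine ⟨h1, le_trans h2 ?_⟩
  nlinarith [Finset.card_le_card (Finset.empty_subset (sparseProc C g i (pj - pi + 1) pi pj).1)]
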